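/- Let a, b : ℤ → ℂ be absolutely summable sequences and let c be their convolution, c(k) := Σ_{r∈ℤ} a(k−r)·b(r). Then for every m ∈ ℕ and all integers i, j with |i| ≤ m and |j| ≤ m, Σ_{r=−m}^{m} a(i−r)·b(r−j) = c(i−j) − Σ_{r>m} a(i−r)·b(r−j) − Σ_{r<−m} a(i−r)·b(r−j). This is the entrywise form of the finite-section identity T_m(a)·T_m(b) = T_m(c) − H_{(m,∞)}(a⁺)H_{(∞,m)}(b⁻) − J_m H_{(m,∞)}(a⁻)H_{(∞,m)}(b⁺) J_m for the (2m+1)×(2m+1) truncated Toeplitz matrices. -/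

import Mathlib

/-- Entrywise form of the finite-section identity
`T_m(a)·T_m(b) = T_m(c) − H_{(m,∞)}(a⁺)H_{(∞,m)}(b⁻) − J_m H_{(m,∞)}(a⁻)H_{(∞,m)}(b⁺) J_m`. -/
theorem truncated_toeplitz_product
    (a b c : ℤ → ℂ)
    (ha : Summable fun k => ‖a k‖) (hb : Summable fun k => ‖b k‖)
    (hc : ∀ k : ℤ, c k = ∑' r : ℤ, a (k - r) * b r) :
    ∀ (m : ℕ) (i j : ℤ), |i| ≤ (m : ℤ) → |j| ≤ (m : ℤ) →
      ∑ r ∈ Finset.Icc (-(m : ℤ)) (m : ℤ), a (i - r) * b (r - j)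
        = c (i - j)
          - (∑' r : {r : ℤ // (m : ℤ) < r}, a (i - (r : ℤ)) * b ((r : ℤ) - j))
          - ∑' r : {r : ℤ // (r : ℤ) < -(m : ℤ)}, a (i - (r : ℤ)) * b ((r : ℤ) - j) := by
  intro m i j hi hj
  set f : ℤ → ℂ := fun r => a (i - r) * b (r - j) with hfdef
  have hB : ∀ k : ℤ, ‖b k‖ ≤ ∑' k, ‖b k‖ := fun k =>
    Summable.le_tsum hb k (fun _ _ => norm_nonneg _)
  have hinj : Function.Injective (fun r : ℤ => i - r) := fun x y h => by simp only [sub_right_inj] at h; exact h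
  have hf : Summable f := by
    apply Summable.of_norm
    apply Summable.of_nonneg_of_le (fun r => norm_nonneg _) (fun r => ?_)
      ((ha.comp_injective hinj).mul_right (∑' k, ‖b k‖))
    simp only [f, norm_mul, Function.comp]
    exact mul_le_mul_of_nonneg_left (hB _) (norm_nonneg _)
  have key : (∑' r, f r) = c (i - j) := by
    rw [hc]
    rw [← (Equiv.subRight j).tsum_eq (fun r => a (i - j - r) * b r)]
    apply tsum_congr
    intro r
    simp only [f, Equiv.subRight_apply]
    congr 2
    ring
  have hsplit := Summable.tsum_subtype_add_tsum_subtype_compl hf (Set.Icc (-(m:ℤ)) (m:ℤ))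
  have hcompl : (Set.Icc (-(m:ℤ)) (m:ℤ))ᶜ = Set.Iio (-(m:ℤ)) ∪ Set.Ioi (m:ℤ) := by
    ext r
    simp [not_and_or, not_le, or_comm]
    omega
  rw [hcompl] at hsplit
  rw [Summable.tsum_union_disjoint (f := f) (by
        rw [Set.disjoint_left]; intro r hr hr'
        simp only [Set.mem_Iio, Set.mem_Ioi] at hr hr'
        omega)
      (hf.subtype _) (hf.subtype _)] at hsplit
  have hfin : (∑' r : (Set.Icc (-(m:ℤ)) (m:ℤ)), f r)
      = ∑ r ∈ Finset.Icc (-(m:ℤ)) (m:ℤ), f r := by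
    rw [← Finset.coe_Icc]
    exact Finset.tsum_subtype' _ _
  have e1 : (∑' r : {r : ℤ // (m : ℤ) < r}, a (i - (r : ℤ)) * b ((r : ℤ) - j))
      = ∑' r : (Set.Ioi (m:ℤ)), f r := rfl
  have e2 : (∑' r : {r : ℤ // (r : ℤ) < -(m : ℤ)}, a (i - (r : ℤ)) * b ((r : ℤ) - j))
      = ∑' r : (Set.Iio (-(m:ℤ))), f r := rfl
  rw [hfin] at hsplit
  rw [e1, e2, ← key]
  linear_combination hsplit
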